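/- Let G, M, B be the Gibbs, Metropolis–Hastings and Barker orbit kernels associated with π and the same orbit partition. Then, as matrix products, GM = MG = G and GB = BG = G. -/

import Mathlib

open Matrix Finset

/-- Total mass of the orbit (block) `i` under `π`. -/
noncomputable def orbMass {n k : ℕ} (π : Fin n → ℝ) (part : Fin n → Fin k) (i : Fin k) : ℝ :=
  ∑ z ∈ Finset.univ.filter (fun z => part z = i), π z

/-- Number of states in the orbit (block) `i`. -/
def orbCard {n k : ℕ} (part : Fin n → Fin k) (i : Fin k) : ℕ :=
  (Finset.univ.filter (fun z => part z = i)).card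

/-- The Gibbs orbit kernel. -/
noncomputable def gibbsKer {n k : ℕ} (π : Fin n → ℝ) (part : Fin n → Fin k) :
    Matrix (Fin n) (Fin n) ℝ :=
  Matrix.of fun x y => if part y = part x then π y / orbMass π part (part x) else 0

/-- The Metropolis–Hastings orbit kernel. -/
noncomputable def mhKer {n k : ℕ} (π : Fin n → ℝ) (part : Fin n → Fin k) :
    Matrix (Fin n) (Fin n) ℝ :=
  Matrix.of fun x y =>
    if x = y then
      1 - ∑ z ∈ Finset.univ.filter (fun z => z ≠ x ∧ part z = part x),
            min 1 (π z / π x) / ((orbCard part (part x) : ℝ) - 1)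
    else if part y = part x then
      min 1 (π y / π x) / ((orbCard part (part x) : ℝ) - 1)
    else 0

/-- The Barker orbit kernel. -/
noncomputable def barkerKer {n k : ℕ} (π : Fin n → ℝ) (part : Fin n → Fin k) :
    Matrix (Fin n) (Fin n) ℝ :=
  Matrix.of fun x y =>
    if x = y then
      1 - ∑ z ∈ Finset.univ.filter (fun z => z ≠ x ∧ part z = part x),
            (π z / (π x + π z)) / ((orbCard part (part x) : ℝ) - 1)
    else if part y = part x then
      (π y / (π x + π y)) / ((orbCard part (part x) : ℝ) - 1)
    else 0

section Aux

variable {n k : ℕ}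

lemma orbMass_pos (π : Fin n → ℝ) (part : Fin n → Fin k) (hπ : ∀ x, 0 < π x) (x : Fin n) :
    0 < orbMass π part (part x) := by
  apply Finset.sum_pos (fun z _ => hπ z)
  exact ⟨x, by simp⟩

/-- Generic row-sum-one lemma for kernels of the Metropolis/Barker shape. -/
lemma row_sum_one (part : Fin n → Fin k) (f : Fin n → Fin n → ℝ) (x : Fin n) :
    ∑ z, (if x = z then
        1 - ∑ w ∈ Finset.univ.filter (fun w => w ≠ x ∧ part w = part x), f x w
      else if part z = part x then f x z else 0) = 1 := by
  rw [← Finset.add_sum_erase Finset.univ _ (Finset.mem_univ x)]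
  rw [if_pos rfl]
  have h1 : ∀ z ∈ Finset.univ.erase x,
      (if x = z then
        1 - ∑ w ∈ Finset.univ.filter (fun w => w ≠ x ∧ part w = part x), f x w
      else if part z = part x then f x z else 0) = if part z = part x then f x z else 0 := by
    intro z hz
    rw [if_neg (Ne.symm (Finset.mem_erase.1 hz).1)]
  rw [Finset.sum_congr rfl h1, ← Finset.sum_filter]
  have h2 : (Finset.univ.erase x).filter (fun z => part z = part x)
      = Finset.univ.filter (fun w => w ≠ x ∧ part w = part x) := by
    ext z; simp [Finset.mem_filter, Finset.mem_erase, and_comm]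
  rw [h2]; ring

lemma key_GK (π : Fin n → ℝ) (part : Fin n → Fin k) (hπ : ∀ x, 0 < π x)
    (K : Matrix (Fin n) (Fin n) ℝ)
    (h0 : ∀ x y, x ≠ y → part y ≠ part x → K x y = 0)
    (hrow : ∀ x, ∑ z, K x z = 1)
    (hrev : ∀ x y, π x * K x y = π y * K y x) :
    gibbsKer π part * K = gibbsKer π part := by
  ext x y
  rw [Matrix.mul_apply]
  simp only [gibbsKer, Matrix.of_apply]
  by_cases hxy : part y = part x
  · rw [if_pos hxy]
    have hstat : ∑ z, π z * K z y = π y := by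
      have h1 : ∀ z ∈ Finset.univ, π z * K z y = π y * K y z := fun z _ => hrev z y
      rw [Finset.sum_congr rfl h1, ← Finset.mul_sum, hrow, mul_one]
    have h2 : ∑ z, (if part z = part x then π z / orbMass π part (part x) else 0) * K z y
        = (∑ z, π z * K z y) / orbMass π part (part x) := by
      rw [Finset.sum_div]
      apply Finset.sum_congr rfl
      intro z _
      by_cases hz : part z = part x
      · rw [if_pos hz]; ring
      · have hzy : z ≠ y := fun h => hz (h ▸ hxy)
        rw [if_neg hz, h0 z y hzy (by rw [hxy]; exact fun h => hz h.symm), zero_mul,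
          mul_zero, zero_div]
    rw [h2, hstat]
  · rw [if_neg hxy]
    apply Finset.sum_eq_zero
    intro z _
    by_cases hz : part z = part x
    · have hzy : z ≠ y := fun h => hxy (h ▸ hz)
      rw [h0 z y hzy (by rw [hz]; exact hxy), mul_zero]
    · rw [if_neg hz, zero_mul]

lemma key_KG (π : Fin n → ℝ) (part : Fin n → Fin k)
    (K : Matrix (Fin n) (Fin n) ℝ)
    (h0 : ∀ x y, x ≠ y → part y ≠ part x → K x y = 0)
    (hrow : ∀ x, ∑ z, K x z = 1) :
    K * gibbsKer π part = gibbsKer π part := by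
  ext x y
  rw [Matrix.mul_apply]
  simp only [gibbsKer, Matrix.of_apply]
  by_cases hxy : part y = part x
  · rw [if_pos hxy]
    have h1 : ∀ z ∈ Finset.univ, K x z * (if part y = part z then π y / orbMass π part (part z) else 0)
        = K x z * (π y / orbMass π part (part x)) := by
      intro z _
      by_cases hz : part z = part x
      · rw [if_pos (hxy.trans hz.symm), hz]
      · have hxz : x ≠ z := fun h => hz (h ▸ rfl)
        rw [h0 x z hxz hz, zero_mul, zero_mul]
    rw [Finset.sum_congr rfl h1, ← Finset.sum_mul, hrow, one_mul]
  · rw [if_neg hxy]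
    apply Finset.sum_eq_zero
    intro z _
    by_cases hz : part z = part x
    · rw [if_neg (fun h => hxy (h.trans hz)), mul_zero]
    · have hxz : x ≠ z := fun h => hz (h ▸ rfl)
      rw [h0 x z hxz hz, zero_mul]

lemma mh_h0 (π : Fin n → ℝ) (part : Fin n → Fin k) :
    ∀ x y, x ≠ y → part y ≠ part x → mhKer π part x y = 0 := by
  intro x y hxy hp
  simp [mhKer, hxy, hp]

lemma barker_h0 (π : Fin n → ℝ) (part : Fin n → Fin k) :
    ∀ x y, x ≠ y → part y ≠ part x → barkerKer π part x y = 0 := by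
  intro x y hxy hp
  simp [barkerKer, hxy, hp]

lemma mh_row (π : Fin n → ℝ) (part : Fin n → Fin k) (x : Fin n) :
    ∑ z, mhKer π part x z = 1 := by
  simpa [mhKer] using row_sum_one part
    (fun x z => min 1 (π z / π x) / ((orbCard part (part x) : ℝ) - 1)) x

lemma barker_row (π : Fin n → ℝ) (part : Fin n → Fin k) (x : Fin n) :
    ∑ z, barkerKer π part x z = 1 := by
  simpa [barkerKer] using row_sum_one part
    (fun x z => (π z / (π x + π z)) / ((orbCard part (part x) : ℝ) - 1)) x

lemma mh_rev (π : Fin n → ℝ) (part : Fin n → Fin k) (hπ : ∀ x, 0 < π x) (x y : Fin n) :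
    π x * mhKer π part x y = π y * mhKer π part y x := by
  by_cases hxy : x = y
  · subst hxy; rfl
  · by_cases hp : part y = part x
    · have hmin : ∀ a b : Fin n, π a * min 1 (π b / π a) = min (π a) (π b) := by
        intro a b
        rcases le_total (π a) (π b) with h | h
        · rw [min_eq_left ((le_div_iff₀ (hπ a)).2 (by linarith)), min_eq_left h, mul_one]
        · rw [min_eq_right ((div_le_one (hπ a)).2 h), min_eq_right h,
            mul_div_cancel₀ _ (hπ a).ne']
      simp only [mhKer, Matrix.of_apply, if_neg hxy, if_neg (Ne.symm hxy), if_pos hp,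
        if_pos hp.symm, hp]
      rw [if_pos trivial, if_pos trivial, mul_div_assoc', mul_div_assoc', hmin, hmin, min_comm]
    · rw [mh_h0 π part x y hxy hp, mh_h0 π part y x (Ne.symm hxy) (fun h => hp h.symm),
        mul_zero, mul_zero]

lemma barker_rev (π : Fin n → ℝ) (part : Fin n → Fin k) (hπ : ∀ x, 0 < π x) (x y : Fin n) :
    π x * barkerKer π part x y = π y * barkerKer π part y x := by
  by_cases hxy : x = y
  · subst hxy; rfl
  · by_cases hp : part y = part x
    · simp only [barkerKer, Matrix.of_apply, if_neg hxy, if_neg (Ne.symm hxy), if_pos hp,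
        if_pos hp.symm, hp]
      have h1 : π x + π y ≠ 0 := (add_pos (hπ x) (hπ y)).ne'
      rw [if_pos trivial, if_pos trivial, mul_div_assoc', mul_div_assoc']
      congr 1
      rw [add_comm (π y) (π x)]
      ring
    · rw [barker_h0 π part x y hxy hp, barker_h0 π part y x (Ne.symm hxy) (fun h => hp h.symm),
        mul_zero, mul_zero]

end Aux

/-- `GM = MG = G` and `GB = BG = G`. -/
theorem stmt6 {n k : ℕ} (hn : 0 < n)
    (π : Fin n → ℝ) (hπpos : ∀ x, 0 < π x) (hπsum : ∑ x, π x = 1)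
    (part : Fin n → Fin k) (hpart : Function.Surjective part) :
    gibbsKer π part * mhKer π part = gibbsKer π part ∧
    mhKer π part * gibbsKer π part = gibbsKer π part ∧
    gibbsKer π part * barkerKer π part = gibbsKer π part ∧
    barkerKer π part * gibbsKer π part = gibbsKer π part := by
  refine ⟨?_, ?_, ?_, ?_⟩
  · exact key_GK π part hπpos _ (mh_h0 π part) (mh_row π part) (mh_rev π part hπpos)
  · exact key_KG π part _ (mh_h0 π part) (mh_row π part)
  · exact key_GK π part hπpos _ (barker_h0 π part) (barker_row π part) (barker_rev π part hπpos)
  · exact key_KG π part _ (barker_h0 π part) (barker_row π part)
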